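/- arXiv:2009.10923 — 3 statements merged into one kernel-verified Lean document; each statement's English description precedes it below -/
import Mathlib

section
/- For integers K and i with 1 ≤ i < K, the rate of the new scheme is at least the Maddah-Ali–Niesen rate: ⌈K(K−i)/t(K,i)⌉ · (1/K) ≥ (K−i)/(i+1), where t(K,i) = 2 + ⌊i/(K−i+1)⌋ + ⌊(i−1)/(K−i+1)⌋. -/
def t (K i : ℕ) : ℕ := 2 + i / (K - i + 1) + (i - 1) / (K - i + 1)

def Λ (K i : ℕ) : ℕ := ⌈((K * (K - i) : ℕ) : ℚ) / (t K i)⌉₊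

theorem stmt_5 (K i : ℕ) (hi : 1 ≤ i) (hiK : i < K) :
    (Λ K i : ℚ) * (1 / K) ≥ ((K : ℚ) - i) / (i + 1) := by
  have hd : 2 ≤ K - i + 1 := by omega
  have h1 : i / (K - i + 1) ≤ i / 2 := Nat.div_le_div_left hd (by norm_num)
  have h2 : (i - 1) / (K - i + 1) ≤ (i - 1) / 2 := Nat.div_le_div_left hd (by norm_num)
  have e1 : 2 * (i / 2) ≤ i := by omega
  have e2 : 2 * ((i - 1) / 2) ≤ i - 1 := by omega
  have ht : t K i ≤ i + 1 := by simp only [t]; omega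
  have htpos : 0 < t K i := by simp only [t]; positivity
  have hKpos : (0 : ℚ) < K := by exact_mod_cast (by omega : 0 < K)
  have hx : ((K * (K - i) : ℕ) : ℚ) / (i + 1) ≤ ((K * (K - i) : ℕ) : ℚ) / (t K i) := by
    apply div_le_div_of_nonneg_left (by positivity) (by exact_mod_cast htpos)
    exact_mod_cast ht
  have hΛ : ((K * (K - i) : ℕ) : ℚ) / (i + 1) ≤ (Λ K i : ℚ) :=
    le_trans hx (Nat.le_ceil _)
  have heq : ((K : ℚ) - i) / (i + 1) = ((K * (K - i) : ℕ) : ℚ) / (i + 1) * (1 / K) := by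
    push_cast [Nat.cast_sub hiK.le]
    field_simp
  rw [ge_iff_le, heq]
  apply mul_le_mul_of_nonneg_right hΛ
  positivity
end

section
/- For every integer K ≥ 4 not divisible by 3, setting i = K−2: Λ(K,i) = ⌈2K/(2 + ⌊(K−2)/3⌋ + ⌊(K−3)/3⌋)⌉ = 4. (Hence for L = K−2 with 3 ∤ K, the new scheme achieves rate 4/K, exceeding the optimum 3/K by exactly 1/K.) -/
theorem stmt_9 (K : ℕ) (hK : 4 ≤ K) (h3 : ¬ (3 ∣ K)) :
    Λ K (K - 2) = 4 := by
  have h1 : K - (K - 2) + 1 = 3 := by omega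
  have h2 : K - 2 - 1 = K - 3 := by omega
  have hKi : K - (K - 2) = 2 := by omega
  unfold Λ t
  rw [h1, h2, hKi]
  set T : ℕ := 2 + (K - 2) / 3 + (K - 3) / 3 with hT
  have hTpos : 0 < T := by positivity
  have hlow : 3 * T < K * 2 := by
    have := Nat.mod_lt K (show 0 < 3 by norm_num)
    have e1 := Nat.div_add_mod (K - 2) 3
    have e2 := Nat.div_add_mod (K - 3) 3
    have m1 := Nat.mod_lt (K - 2) (show 0 < 3 by norm_num)
    have m2 := Nat.mod_lt (K - 3) (show 0 < 3 by norm_num)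
    have hm : K % 3 = 1 ∨ K % 3 = 2 := by omega
    have hm1 : (K - 2) % 3 = (K + 1) % 3 := by
      conv_rhs => rw [show K + 1 = (K - 2) + 3 by omega]
      simp [Nat.add_mod_right]
    have hm2 : (K - 3) % 3 = K % 3 := by
      conv_rhs => rw [show K = (K - 3) + 3 by omega]
      simp [Nat.add_mod_right]
    have hk1 : (K + 1) % 3 = (K % 3 + 1) % 3 := by omega
    rcases hm with h | h <;> simp [h] at hk1 <;> omega
  have hhigh : K * 2 ≤ 4 * T := by
    have e1 := Nat.div_add_mod (K - 2) 3
    have e2 := Nat.div_add_mod (K - 3) 3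
    have m1 := Nat.mod_lt (K - 2) (show 0 < 3 by norm_num)
    have m2 := Nat.mod_lt (K - 3) (show 0 < 3 by norm_num)
    omega
  rw [Nat.ceil_eq_iff (by norm_num)]
  have hTQ : (0:ℚ) < (T:ℚ) := by exact_mod_cast hTpos
  constructor
  · rw [lt_div_iff₀ hTQ]
    push_cast
    exact_mod_cast (by exact_mod_cast hlow : ((3 * T : ℕ) : ℚ) < ((K * 2 : ℕ) : ℚ))
  · rw [div_le_iff₀ hTQ]
    push_cast
    exact_mod_cast (by exact_mod_cast hhigh : ((K * 2 : ℕ) : ℚ) ≤ ((4 * T : ℕ) : ℚ))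
end

section
/- For integers K ≥ 3 and 1 ≤ i < K−1: Λ(K, i+1) ≤ Λ(K, i), where Λ(K,i) = ⌈K(K−i)/t(K,i)⌉ and t(K,i) = 2 + ⌊i/(K−i+1)⌋ + ⌊(i−1)/(K−i+1)⌋. (The rate Λ(K,i)/K of the new scheme is non-increasing in the cache memory parameter i.) -/
theorem stmt_17 (K i : ℕ) (hK : 3 ≤ K) (hi : 1 ≤ i) (hiK : i < K - 1) :
    Λ K (i + 1) ≤ Λ K i := by
  have hiK' : i + 1 < K := by omega
  have ht_pos : 0 < t K i := by unfold t; positivity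
  have hden : K - (i + 1) + 1 ≤ K - i + 1 := by omega
  have hdenpos : K - (i + 1) + 1 ≠ 0 := by omega
  have ht_mono : t K i ≤ t K (i + 1) := by
    unfold t
    have h1 : i / (K - i + 1) ≤ (i + 1) / (K - (i + 1) + 1) :=
      Nat.div_le_div (by omega) hden hdenpos
    have h2 : (i - 1) / (K - i + 1) ≤ (i + 1 - 1) / (K - (i + 1) + 1) :=
      Nat.div_le_div (by omega) hden hdenpos
    omega
  unfold Λ
  apply Nat.ceil_le_ceil
  apply div_le_div₀ (by positivity)
  · exact_mod_cast Nat.mul_le_mul_left K (by omega)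
  · exact_mod_cast ht_pos
  · exact_mod_cast ht_mono
end
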